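/- arXiv:2506.04935 — 2 statements merged into one kernel-verified Lean document; each statement's English description precedes it below -/
import Mathlib

section
/- Let S be a string, P an aperiodic substring of S, and suppose some position of S is contained in occurrences of P starting at positions x and y with x < y. Then no third occurrence of P contains that position: the occurrences of P containing any fixed position of S number at most two. -/
open Classical

/-- `p` is a period of the string (list) `P`. -/
def IsPeriodOf {α : Type*} (P : List α) (p : ℕ) : Prop :=
  0 < p ∧ ∀ i, i + p < P.length → P[i]? = P[i + p]?

/-- The smallest period of `P`. -/
noncomputable def minPeriod {α : Type*} (P : List α) : ℕ := sInf {p | IsPeriodOf P p}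

/-- `P` is periodic if its smallest period is at most `|P|/2`. -/
def ListPeriodic {α : Type*} (P : List α) : Prop := 2 * minPeriod P ≤ P.length

/-- `P` occurs in `S` starting at position `i`. -/
def OccursAt {α : Type*} (P S : List α) (i : ℕ) : Prop :=
  i + P.length ≤ S.length ∧ (S.drop i).take P.length = P

/-- The set of starting positions of occurrences of `P` in `S`. -/
noncomputable def occ {α : Type*} (P S : List α) : Finset ℕ :=
  (Finset.range (S.length + 1)).filter (fun i => OccursAt P S i)

/-- Hamming distance between two (equal-length) strings. -/
noncomputable def hamming {α : Type*} (S T : List α) : ℕ :=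
  ((List.range S.length).filter (fun i => S[i]? ≠ T[i]?)).length

/-- `P` is `(τ,k)`-resilient in `S`. -/
def Resilient {α : Type*} (P S : List α) (τ k : ℕ) : Prop :=
  ∀ S' : List α, S'.length = S.length → hamming S S' ≤ k → τ ≤ (occ P S').card

/-- The fragment `S[x..y]` (inclusive). -/
def frag {α : Type*} (S : List α) (x y : ℕ) : List α := (S.drop x).take (y - x + 1)

/-- The fragment `S[x..y]` is a run of `S`. -/
def IsRun {α : Type*} (S : List α) (x y : ℕ) : Prop :=
  x ≤ y ∧ y < S.length ∧ 2 * minPeriod (frag S x y) ≤ y - x + 1 ∧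
  (0 < x → ¬ IsPeriodOf (frag S (x - 1) y) (minPeriod (frag S x y))) ∧
  (y + 1 < S.length → ¬ IsPeriodOf (frag S x (y + 1)) (minPeriod (frag S x y)))


lemma occ_get {α : Type*} {P S : List α} {a : ℕ} (h : OccursAt P S a) :
    ∀ i, i < P.length → P[i]? = S[a + i]? := by
  intro i hi
  have h2 := h.2
  have : ((S.drop a).take P.length)[i]? = P[i]? := by rw [h2]
  rw [List.getElem?_take_of_lt hi, List.getElem?_drop] at this
  exact this.symm

lemma gap_lemma {α : Type*} {P S : List α} {a b : ℕ} (hap : ¬ ListPeriodic P)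
    (ha : OccursAt P S a) (hb : OccursAt P S b) (hab : a < b)
    (hlt : b - a < P.length) : P.length < 2 * (b - a) := by
  have hper : IsPeriodOf P (b - a) := by
    refine ⟨Nat.sub_pos_of_lt hab, fun i hi => ?_⟩
    have h1 := occ_get ha i (by omega)
    have h2 := occ_get ha (i + (b - a)) hi
    have h3 := occ_get hb i (by omega)
    rw [h2, show a + (i + (b - a)) = b + i from by omega]
    exact h3
  have hmin : minPeriod P ≤ b - a := Nat.sInf_le hper
  have : ¬ (2 * minPeriod P ≤ P.length) := hap
  omega

theorem stmt13 {α : Type*} (S P : List α) (hap : ¬ ListPeriodic P)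
    (x y q : ℕ) (hx : OccursAt P S x) (hy : OccursAt P S y) (hxy : x < y)
    (hqx : x ≤ q ∧ q < x + P.length) (hqy : y ≤ q ∧ q < y + P.length) :
    ∀ z, OccursAt P S z → z ≤ q → q < z + P.length → z = x ∨ z = y := by
  intro z hz hzq hqz
  by_contra hcon
  push_neg at hcon
  obtain ⟨hzx, hzy⟩ := hcon
  have hPpos : 0 < P.length := by omega
  have hxy' : P.length < 2 * (y - x) := gap_lemma hap hx hy hxy (by omega)
  rcases lt_trichotomy z x with h | h | h
  · have h1 : P.length < 2 * (x - z) := gap_lemma hap hz hx h (by omega)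
    omega
  · exact hzx h
  · rcases lt_trichotomy z y with h2 | h2 | h2
    · have ha : P.length < 2 * (z - x) := gap_lemma hap hx hz h (by omega)
      have hb : P.length < 2 * (y - z) := gap_lemma hap hz hy h2 (by omega)
      omega
    · exact hzy h2
    · have hb : P.length < 2 * (z - y) := gap_lemma hap hy hz h2 (by omega)
      omega
end

section
/- Every occurrence of a periodic substring P of a string S is contained in a unique run of S whose period equals per(P). -/
open Classical

lemma trivPeriod {α : Type*} (P : List α) : IsPeriodOf P (P.length + 1) :=
  ⟨Nat.succ_pos _, fun i h => by omega⟩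

lemma minPeriod_isPeriod {α : Type*} (P : List α) : IsPeriodOf P (minPeriod P) := by
  have h : {p | IsPeriodOf P p}.Nonempty := ⟨P.length + 1, trivPeriod P⟩
  exact Nat.sInf_mem h

lemma minPeriod_le {α : Type*} {P : List α} {p : ℕ} (h : IsPeriodOf P p) : minPeriod P ≤ p :=
  Nat.sInf_le h

lemma frag_get? {α : Type*} (S : List α) (x y j : ℕ) (hj : x + j ≤ y) :
    (frag S x y)[j]? = S[x + j]? := by
  unfold frag
  rw [List.getElem?_take_of_lt (by omega), List.getElem?_drop]

lemma frag_length {α : Type*} (S : List α) {x y : ℕ} (hxy : x ≤ y) (hy : y < S.length) :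
    (frag S x y).length = y - x + 1 := by
  simp only [frag, List.length_take, List.length_drop]
  omega

lemma isPeriod_frag_iff {α : Type*} (S : List α) {x y p : ℕ} (hxy : x ≤ y) (hy : y < S.length)
    (hp : 0 < p) :
    IsPeriodOf (frag S x y) p ↔ ∀ t, x ≤ t → t + p ≤ y → S[t]? = S[t + p]? := by
  constructor
  · rintro ⟨-, h⟩ t ht htp
    have := h (t - x) (by rw [frag_length S hxy hy]; omega)
    rwa [frag_get? S x y _ (by omega), frag_get? S x y _ (by omega),
      show x + (t - x) = t by omega, show x + (t - x + p) = t + p by omega] at this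
  · intro h
    refine ⟨hp, fun j hj => ?_⟩
    rw [frag_length S hxy hy] at hj
    rw [frag_get? S x y _ (by omega), frag_get? S x y _ (by omega)]
    have := h (x + j) (by omega) (by omega)
    rwa [show x + (j + p) = x + j + p by omega]

lemma period_sub {α : Type*} (S : List α) {x y x' y' p : ℕ} (hx : x ≤ x') (hy' : y' ≤ y)
    (hx'y' : x' ≤ y') (hy : y < S.length) (h : IsPeriodOf (frag S x y) p) :
    IsPeriodOf (frag S x' y') p := by
  have hp := h.1
  rw [isPeriod_frag_iff S (hx.trans (hx'y'.trans hy')) hy hp] at h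
  rw [isPeriod_frag_iff S hx'y' (by omega) hp]
  exact fun t ht htp => h t (by omega) (by omega)

theorem stmt15 {α : Type*} (S P : List α) (hper : ListPeriodic P)
    (i : ℕ) (hi : OccursAt P S i) :
    ∃! r : ℕ × ℕ, IsRun S r.1 r.2 ∧ minPeriod (frag S r.1 r.2) = minPeriod P ∧
      r.1 ≤ i ∧ i + P.length ≤ r.2 + 1 := by
  obtain ⟨p, hp_def⟩ : ∃ p, minPeriod P = p := ⟨_, rfl⟩
  have hpP : IsPeriodOf P p := hp_def ▸ minPeriod_isPeriod P
  have hp0 : 0 < p := hpP.1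
  have hP2 : 2 * p ≤ P.length := hp_def ▸ hper
  obtain ⟨y0, hy0_def⟩ : ∃ y0, i + P.length - 1 = y0 := ⟨_, rfl⟩
  have hy0 : y0 < S.length := by have := hi.1; omega
  have hiy0 : i ≤ y0 := by omega
  have hfragP : frag S i y0 = P := by
    unfold frag
    rw [show y0 - i + 1 = P.length by omega]
    exact hi.2
  have hQ0 : ∀ t, i ≤ t → t + p ≤ y0 → S[t]? = S[t + p]? := by
    rw [← isPeriod_frag_iff S hiy0 hy0 hp0, hfragP]; exact hpP
  have hminP : ∀ x y, x ≤ i → y0 ≤ y → y < S.length → IsPeriodOf (frag S x y) p →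
      minPeriod (frag S x y) = p := by
    intro x y hx hy hyS hper'
    refine le_antisymm (minPeriod_le hper') ?_
    have hmem : IsPeriodOf (frag S x y) (minPeriod (frag S x y)) := minPeriod_isPeriod _
    have h2 := period_sub S hx hy hiy0 hyS hmem
    rw [hfragP] at h2
    rw [← hp_def]
    exact minPeriod_le h2
  -- leftmost extension
  obtain ⟨x, hxA, hxmin⟩ : ∃ x, (∀ t, x ≤ t → t + p ≤ y0 → S[t]? = S[t + p]?) ∧
      ∀ z, (∀ t, z ≤ t → t + p ≤ y0 → S[t]? = S[t + p]?) → x ≤ z := by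
    refine ⟨sInf {x | ∀ t, x ≤ t → t + p ≤ y0 → S[t]? = S[t + p]?}, ?_, ?_⟩
    · have h : {x | ∀ t, x ≤ t → t + p ≤ y0 → S[t]? = S[t + p]?}.Nonempty :=
        ⟨i, hQ0⟩
      exact Nat.sInf_mem h
    · exact fun z hz => Nat.sInf_le hz
  have hxi : x ≤ i := hxmin i hQ0
  have hxmax : 0 < x → ¬ ∀ t, x - 1 ≤ t → t + p ≤ y0 → S[t]? = S[t + p]? := by
    intro hx0 hc
    have := hxmin (x - 1) hc
    omega
  -- rightmost extension
  obtain ⟨y, hyB, hymaxle⟩ : ∃ y, (y0 ≤ y ∧ y < S.length ∧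
      ∀ t, i ≤ t → t + p ≤ y → S[t]? = S[t + p]?) ∧
      ∀ z, (y0 ≤ z ∧ z < S.length ∧ ∀ t, i ≤ t → t + p ≤ z → S[t]? = S[t + p]?) →
        z ≤ y := by
    have hBbdd : BddAbove {y | y0 ≤ y ∧ y < S.length ∧
        ∀ t, i ≤ t → t + p ≤ y → S[t]? = S[t + p]?} :=
      ⟨S.length, fun b hb => le_of_lt hb.2.1⟩
    have hBne : {y | y0 ≤ y ∧ y < S.length ∧
        ∀ t, i ≤ t → t + p ≤ y → S[t]? = S[t + p]?}.Nonempty :=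
      ⟨y0, le_refl _, hy0, hQ0⟩
    exact ⟨_, Nat.sSup_mem hBne hBbdd, fun z hz => le_csSup hBbdd hz⟩
  have hy0y : y0 ≤ y := hyB.1
  have hyS : y < S.length := hyB.2.1
  have hymax : y + 1 < S.length →
      ¬ ∀ t, i ≤ t → t + p ≤ y + 1 → S[t]? = S[t + p]? := by
    intro hyS1 hc
    have := hymaxle (y + 1) ⟨by omega, hyS1, hc⟩
    omega
  have hxy : x ≤ y := by omega
  have hQ : ∀ t, x ≤ t → t + p ≤ y → S[t]? = S[t + p]? := by
    intro t ht htp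
    by_cases h : t + p ≤ y0
    · exact hxA t ht h
    · exact hyB.2.2 t (by omega) htp
  have hperxy : IsPeriodOf (frag S x y) p := (isPeriod_frag_iff S hxy hyS hp0).mpr hQ
  have hmin : minPeriod (frag S x y) = p := hminP x y hxi hy0y hyS hperxy
  refine ⟨(x, y), ⟨⟨hxy, hyS, ?_, ?_, ?_⟩, ?_, hxi, by omega⟩, ?_⟩
  · show 2 * minPeriod (frag S x y) ≤ y - x + 1
    rw [hmin]; omega
  · show 0 < x → ¬ IsPeriodOf (frag S (x - 1) y) (minPeriod (frag S x y))
    rw [hmin]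
    intro hx0 hcon
    exact hxmax hx0
      (fun t ht htp => (isPeriod_frag_iff S (by omega) hyS hp0).mp hcon t ht (by omega))
  · show y + 1 < S.length → ¬ IsPeriodOf (frag S x (y + 1)) (minPeriod (frag S x y))
    rw [hmin]
    intro hyS1 hcon
    exact hymax hyS1
      (fun t ht htp => (isPeriod_frag_iff S (by omega) hyS1 hp0).mp hcon t (by omega) htp)
  · show minPeriod (frag S x y) = minPeriod P
    rw [hmin, hp_def]
  -- uniqueness
  · rintro ⟨x', y'⟩ ⟨⟨hxy', hyS', h2', hl', hr'⟩, hmin', hxi', hylen'⟩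
    have hmin'' : minPeriod (frag S x' y') = p := by
      have h0 : minPeriod (frag S (x', y').1 (x', y').2) = minPeriod P := hmin'
      rwa [hp_def] at h0
    replace hxi' : x' ≤ i := hxi'
    have hy0y' : y0 ≤ y' := by
      have h0 : i + P.length ≤ (x', y').2 + 1 := hylen'
      simp only at h0
      omega
    replace hxy' : x' ≤ y' := hxy'
    replace hyS' : y' < S.length := hyS'
    have hl'' : 0 < x' → ¬ IsPeriodOf (frag S (x' - 1) y') p := by
      intro h
      have h0 := hl' h
      rwa [hmin''] at h0
    have hr'' : y' + 1 < S.length → ¬ IsPeriodOf (frag S x' (y' + 1)) p := by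
      intro h
      have h0 := hr' h
      rwa [hmin''] at h0
    clear hl' hr' hmin' hylen' h2'
    have hper' : IsPeriodOf (frag S x' y') p := hmin'' ▸ minPeriod_isPeriod _
    have hQ' : ∀ t, x' ≤ t → t + p ≤ y' → S[t]? = S[t + p]? :=
      (isPeriod_frag_iff S hxy' hyS' hp0).mp hper'
    have hyi : i + p ≤ y0 := by omega
    have hQu : ∀ t, min x x' ≤ t → t + p ≤ max y y' → S[t]? = S[t + p]? := by
      intro t ht htp
      by_cases h1 : x ≤ t ∧ t + p ≤ y
      · exact hQ t h1.1 h1.2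
      by_cases h2 : x' ≤ t ∧ t + p ≤ y'
      · exact hQ' t h2.1 h2.2
      exfalso
      by_cases ht1 : t + p ≤ y0
      · rcases le_or_gt x t with h | h
        · exact h1 ⟨h, by omega⟩
        · exact h2 ⟨by omega, by omega⟩
      · rcases le_or_gt (t + p) y with h | h
        · exact h1 ⟨by omega, h⟩
        · exact h2 ⟨by omega, by omega⟩
    have hxx : x' = x := by
      by_contra hne
      rcases Nat.lt_or_ge x x' with h | h
      · have hcon : IsPeriodOf (frag S (x' - 1) y') p :=
          (isPeriod_frag_iff S (by omega) hyS' hp0).mpr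
            (fun t ht htp => hQu t (by omega) (by omega))
        exact hl'' (by omega) hcon
      · have hx0 : 0 < x := by omega
        have hcon : IsPeriodOf (frag S (x - 1) y) p :=
          (isPeriod_frag_iff S (by omega) hyS hp0).mpr
            (fun t ht htp => hQu t (by omega) (by omega))
        exact hxmax hx0
          (fun t ht htp => (isPeriod_frag_iff S (by omega) hyS hp0).mp hcon t ht (by omega))
    have hyy : y' = y := by
      by_contra hne
      rcases Nat.lt_or_ge y y' with h | h
      · have hyS1 : y + 1 < S.length := by omega
        have hcon : IsPeriodOf (frag S x (y + 1)) p :=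
          (isPeriod_frag_iff S (by omega) hyS1 hp0).mpr
            (fun t ht htp => hQu t (by omega) (by omega))
        exact hymax hyS1
          (fun t ht htp => (isPeriod_frag_iff S (by omega) hyS1 hp0).mp hcon t (by omega) htp)
      · have hyS1' : y' + 1 < S.length := by omega
        have hcon : IsPeriodOf (frag S x' (y' + 1)) p :=
          (isPeriod_frag_iff S (by omega) hyS1' hp0).mpr
            (fun t ht htp => hQu t (by omega) (by omega))
        exact hr'' hyS1' hcon
    exact Prod.ext hxx hyy
end
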